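/- Let σ : ℂ → ℂ be either the identity or complex conjugation, let X ∈ M(2,ℂ) be a σ-symmetric matrix with associated σ-form f, and let (ξ,η) ∈ ℂ² be a nontrivial zero of f. Let (a_n)_{n≥0} be a continued fraction expansion of ξ/η over Γ, let (g_n)_{n≥0} be the associated sequence of matrices, and let N ⊆ ℕ be an infinite neat subset for the expansion. Then {X_{g_n,σ} : n ∈ N} is a bounded subset of M(2,ℂ). Moreover, if X ∈ M(2, k^{−1}Γ) for some k ∈ ℕ (i.e. all entries of X lie in k^{−1}Γ), then {X_{g_n,σ} : n ∈ N} is a finite set. -/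

import Mathlib

/-- The quotient field of a subring `Γ` of `ℂ`, as a subset of `ℂ`. -/
def quotField (Γ : Subring ℂ) : Set ℂ :=
  {x | ∃ p ∈ Γ, ∃ q ∈ Γ, q ≠ 0 ∧ x = p / q}

/-- `(a n)` is a continued fraction expansion of `z` over `Γ`, with iteration
sequence `(zs n)`: `zs 0 = z`, `0 < |zs n - a n| < 1` and `zs (n+1) = (zs n - a n)⁻¹`. -/
def IsCFE (Γ : Subring ℂ) (z : ℂ) (a zs : ℕ → ℂ) : Prop :=
  (∀ n, a n ∈ Γ) ∧ zs 0 = z ∧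
    (∀ n, 0 < ‖zs n - a n‖ ∧ ‖zs n - a n‖ < 1) ∧
    (∀ n, zs (n + 1) = (zs n - a n)⁻¹)

/-- The Q-pair of a sequence of partial quotients, with indices shifted by one:
`p (n+1)` is the paper's `p_n` and `q (n+1)` is the paper's `q_n`
(so `p 0 = p_{-1} = 1` and `q 0 = q_{-1} = 0`). -/
def IsQPair (a p q : ℕ → ℂ) : Prop :=
  p 0 = 1 ∧ p 1 = a 0 ∧ (∀ n, p (n + 2) = a (n + 1) * p (n + 1) + p n) ∧
  q 0 = 0 ∧ q 1 = 1 ∧ (∀ n, q (n + 2) = a (n + 1) * q (n + 1) + q n)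


/-- The sequence of relative errors `δ_n = q_n (q_n z - p_n)` (index shifted by one
in `p`, `q`, so `relErr z p q n` is the paper's `δ_n`). -/
def relErr (z : ℂ) (p q : ℕ → ℂ) (n : ℕ) : ℂ :=
  q (n + 1) * (q (n + 1) * z - p (n + 1))

/-- `N ⊆ ℕ` is a neat subset for the expansion: `|q_{n-1}| ≤ |q_n|` for all `n ∈ N`
and `liminf_{n ∈ N} |z_{n+1}| > 1` (there is `α > 1` with `|z_{n+1}| ≥ α` for all but
finitely many `n ∈ N`). Indices of `q` are shifted by one, so `q n` is the paper's `q_{n-1}`. -/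
def IsNeat (zs q : ℕ → ℂ) (N : Set ℕ) : Prop :=
  (∀ n ∈ N, ‖q n‖ ≤ ‖q (n + 1)‖) ∧
  ∃ α : ℝ, 1 < α ∧ {n | n ∈ N ∧ ‖zs (n + 1)‖ < α}.Finite

/-- The σ-form associated with a 2×2 matrix `X = [[A,B],[C,D]]`:
`f(ξ,η) = A ξ^σ ξ + B ξ^σ η + C η^σ ξ + D η^σ η`. -/
def sform (σ : ℂ → ℂ) (X : Matrix (Fin 2) (Fin 2) ℂ) (ξ η : ℂ) : ℂ :=
  σ ξ * (X 0 0 * ξ + X 0 1 * η) + σ η * (X 1 0 * ξ + X 1 1 * η)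

/-- `X_{g,σ} = (gᵗ)^σ X g`. -/
noncomputable def matTransform (σ : ℂ → ℂ) (X g : Matrix (Fin 2) (Fin 2) ℂ) :
    Matrix (Fin 2) (Fin 2) ℂ :=
  (g.transpose.map σ) * X * g

/-- The matrix `g_n = [[p_n, p_{n-1}],[q_n, q_{n-1}]]` associated with a continued
fraction expansion (indices of `p`, `q` shifted by one). -/
def cfMatrix (p q : ℕ → ℂ) (n : ℕ) : Matrix (Fin 2) (Fin 2) ℂ :=
  !![p (n + 1), p n; q (n + 1), q n]

open Complex


lemma conj_mem_of_discrete (Γ : Subring ℂ) (hdisc : DiscreteTopology Γ) {γ : ℂ} (hγ : γ ∈ Γ) :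
    (starRingEnd ℂ) γ ∈ Γ := by
  by_cases him : γ.im = 0
  · rw [Complex.conj_eq_iff_im.mpr him]; exact hγ
  set c : ℂ := (starRingEnd ℂ) γ with hc
  set L : Submodule ℤ ℂ :=
    { carrier := Γ
      add_mem' := fun ha hb => Γ.add_mem ha hb
      zero_mem' := Γ.zero_mem
      smul_mem' := fun n x hx => by
        simpa [zsmul_eq_mul] using Γ.mul_mem (intCast_mem Γ n) hx } with hLdef
  haveI hLd : DiscreteTopology L := DiscreteTopology.of_subset hdisc (fun x hx => hx)
  haveI hLz : IsZLattice ℝ L := by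
    constructor
    rw [eq_top_iff]
    rintro z -
    have h1 : (1:ℂ) ∈ Submodule.span ℝ (L : Set ℂ) := Submodule.subset_span Γ.one_mem
    have h2 : γ ∈ Submodule.span ℝ (L : Set ℂ) := Submodule.subset_span hγ
    have hz : z = ((z.re - z.im * γ.re / γ.im) : ℝ) • (1:ℂ) + ((z.im / γ.im) : ℝ) • γ := by
      rw [Complex.real_smul, Complex.real_smul]
      apply Complex.ext <;> simp <;> field_simp <;> ring
    rw [hz]
    exact Submodule.add_mem _ (Submodule.smul_mem _ _ h1) (Submodule.smul_mem _ _ h2)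
  have hrank : Module.finrank ℤ L = 2 := by
    rw [ZLattice.rank ℝ L, Complex.finrank_real_complex]
  haveI hLfin : Module.Finite ℤ L := inferInstance
  have hnli : ¬ LinearIndependent ℤ
      ![(⟨1, Γ.one_mem⟩ : L), ⟨γ, hγ⟩, ⟨γ*γ, Γ.mul_mem hγ hγ⟩] := by
    intro h
    have := h.fintype_card_le_finrank
    rw [hrank] at this
    simp at this
  obtain ⟨g, hsum, i, hgi⟩ := Fintype.not_linearIndependent_iff.mp hnli
  have hsum' : (g 0 : ℂ) * 1 + (g 1 : ℂ) * γ + (g 2 : ℂ) * (γ*γ) = 0 := by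
    have := congrArg (fun x : L => (x : ℂ)) hsum
    simpa [Fin.sum_univ_three, zsmul_eq_mul] using this
  have hg2 : g 2 ≠ 0 := by
    intro h2
    rw [h2] at hsum'
    push_cast at hsum'
    have him0 := congrArg Complex.im hsum'
    simp at him0
    have hg1 : g 1 = 0 := by
      rcases him0 with h | h
      · exact_mod_cast h
      · exact absurd h him
    rw [hg1] at hsum'
    simp at hsum'
    have hg0 : g 0 = 0 := by exact_mod_cast hsum'
    fin_cases i <;> simp_all
  have hcsum : (g 0 : ℂ) * 1 + (g 1 : ℂ) * c + (g 2 : ℂ) * (c*c) = 0 := by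
    have := congrArg (starRingEnd ℂ) hsum'
    simpa [map_add, map_mul, hc] using this
  have hfact : (γ - c) * ((g 1 : ℂ) + (g 2 : ℂ) * (γ + c)) = 0 := by
    linear_combination hsum' - hcsum
  have hγc : γ - c ≠ 0 := by
    rw [sub_ne_zero, hc]
    intro h
    exact him (Complex.conj_eq_iff_im.mp h.symm)
  have hkey : (g 1 : ℂ) + (g 2 : ℂ) * (γ + c) = 0 :=
    (mul_eq_zero.mp hfact).resolve_left hγc
  haveI : IsNoetherian ℤ L := inferInstance
  have hle : (Algebra.adjoin ℤ ({γ} : Set ℂ)).toSubmodule ≤ L := by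
    intro x hx
    induction hx using Algebra.adjoin_induction with
    | mem y hy => rw [Set.mem_singleton_iff] at hy; exact hy ▸ hγ
    | algebraMap r => rw [algebraMap_int_eq, eq_intCast]; exact intCast_mem Γ r
    | add x y _ _ hx hy => exact Γ.add_mem hx hy
    | mul x y _ _ hx hy => exact Γ.mul_mem hx hy
  have hFG : (Algebra.adjoin ℤ ({γ} : Set ℂ)).toSubmodule.FG := by
    have h1 := (IsNoetherian.noetherian
      ((Algebra.adjoin ℤ ({γ} : Set ℂ)).toSubmodule.comap L.subtype)).map L.subtype
    rwa [Submodule.map_comap_subtype, inf_eq_right.mpr hle] at h1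
  have hintγ : IsIntegral ℤ γ :=
    IsIntegral.of_mem_of_fg _ hFG γ (Algebra.self_mem_adjoin_singleton ℤ γ)
  have hintc : IsIntegral ℤ c := map_isIntegral_int (starRingEnd ℂ) hintγ
  have hint : IsIntegral ℤ (γ + c) := hintγ.add hintc
  have hrat : γ + c = algebraMap ℚ ℂ (-(g 1 : ℚ)/(g 2 : ℚ)) := by
    have hg2' : (g 2 : ℂ) ≠ 0 := Int.cast_ne_zero.mpr hg2
    rw [map_div₀, map_neg, map_intCast, map_intCast, eq_div_iff hg2']
    linear_combination hkey
  have hint2 : IsIntegral ℤ (-(g 1 : ℚ)/(g 2 : ℚ)) :=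
    (isIntegral_algebraMap_iff (algebraMap ℚ ℂ).injective).mp (hrat ▸ hint)
  obtain ⟨t, ht⟩ := IsIntegrallyClosed.isIntegral_iff.mp hint2
  have htc : γ + c = ((t : ℚ) : ℂ) := by
    rw [hrat, ← ht]; simp
  have hcval : c = (t : ℂ) - γ := by
    push_cast at htc
    linear_combination htc
  rw [hcval]
  exact Γ.sub_mem (intCast_mem Γ t) hγ



lemma entry_identity (φ : ℂ →+* ℂ) (A B C D z Q E Q' E' : ℂ)
    (hz : A * φ z * z + B * φ z + C * z + D = 0) :
    A * φ (Q*z - E) * (Q'*z - E') + B * φ (Q*z - E) * Q'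
      + C * φ Q * (Q'*z - E') + D * φ Q * Q'
    = -(A * φ (Q*z-E) * E' + A * φ E * (Q'*z - E') + A * φ E * E'
        + B * φ E * Q' + C * φ Q * E') := by
  have h1 : φ (Q*z - E) = φ Q * φ z - φ E := by rw [map_sub, map_mul]
  rw [h1]
  linear_combination (φ Q * Q') * hz

lemma abs_sub_le' (x y : ℂ) : ‖x - y‖ ≤ ‖x‖ + ‖y‖ := by
  simpa [sub_eq_add_neg] using norm_add_le x (-y)

lemma tri5 (a b c d e : ℂ) : ‖a+b+c+d+e‖ ≤
    ‖a‖ + ‖b‖ + ‖c‖ + ‖d‖ + ‖e‖ := by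
  calc ‖a+b+c+d+e‖ ≤ ‖a+b+c+d‖ + ‖e‖ := norm_add_le _ _
    _ ≤ (‖a+b+c‖ + ‖d‖) + ‖e‖ := by
        have := norm_add_le (a+b+c) d; linarith
    _ ≤ ((‖a+b‖ + ‖c‖) + ‖d‖) + ‖e‖ := by
        have := norm_add_le (a+b) c; linarith
    _ ≤ _ := by have := norm_add_le a b; linarith

lemma entry_est (φ : ℂ →+* ℂ) (habs : ∀ x, ‖φ x‖ = ‖x‖)
    (A B C D z Q E Q' E' : ℂ) (hz : A * φ z * z + B * φ z + C * z + D = 0)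
    (cc : ℝ) (hQE' : ‖Q * E'‖ ≤ cc) (hEQ' : ‖E * Q'‖ ≤ cc)
    (hE : ‖E‖ ≤ 1) (hE' : ‖E'‖ ≤ 1) :
    ‖A * φ (Q*z - E) * (Q'*z - E') + B * φ (Q*z - E) * Q'
      + C * φ Q * (Q'*z - E') + D * φ Q * Q'‖
    ≤ ‖A‖ * (2*(‖z‖ * cc + 1) + 1)
      + ‖B‖ * cc + ‖C‖ * cc := by
  have habs_mul : ∀ x y : ℂ, ‖x*y‖ = ‖x‖ * ‖y‖ :=
    fun x y => norm_mul x y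
  have hA := norm_nonneg A
  have hzn := norm_nonneg z
  have hEn := norm_nonneg E
  have hE'n := norm_nonneg E'
  have hccn : (0:ℝ) ≤ cc := le_trans (norm_nonneg _) hQE'
  have hprod : ‖(Q*z - E) * E'‖ ≤ ‖z‖ * cc + 1 := by
    have h : (Q*z-E)*E' = z*(Q*E') - E*E' := by ring
    rw [h]
    calc ‖z*(Q*E') - E*E'‖ ≤ ‖z*(Q*E')‖ + ‖E*E'‖ :=
          abs_sub_le' _ _
      _ ≤ ‖z‖ * cc + 1 := by
          rw [habs_mul z (Q*E'), habs_mul E E']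
          nlinarith [norm_nonneg (Q*E')]
  have hprod2 : ‖E * (Q'*z - E')‖ ≤ ‖z‖ * cc + 1 := by
    have h : E*(Q'*z-E') = z*(E*Q') - E*E' := by ring
    rw [h]
    calc ‖z*(E*Q') - E*E'‖ ≤ ‖z*(E*Q')‖ + ‖E*E'‖ :=
          abs_sub_le' _ _
      _ ≤ ‖z‖ * cc + 1 := by
          rw [habs_mul z (E*Q'), habs_mul E E']
          nlinarith [norm_nonneg (E*Q')]
  rw [entry_identity φ A B C D z Q E Q' E' hz, norm_neg]
  have b1 : ‖A * φ (Q*z-E) * E'‖ ≤ ‖A‖ * (‖z‖ * cc + 1) := by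
    have e1 : ‖A * φ (Q*z-E) * E'‖ = ‖A‖ * ‖(Q*z-E)*E'‖ := by
      rw [mul_assoc, habs_mul A, habs_mul (φ (Q*z-E)) E', habs, habs_mul]
    rw [e1]
    exact mul_le_mul_of_nonneg_left hprod hA
  have b2 : ‖A * φ E * (Q'*z - E')‖ ≤ ‖A‖ * (‖z‖ * cc + 1) := by
    have e2 : ‖A * φ E * (Q'*z - E')‖ =
        ‖A‖ * ‖E*(Q'*z-E')‖ := by
      rw [mul_assoc, habs_mul A, habs_mul (φ E), habs, habs_mul]
    rw [e2]
    exact mul_le_mul_of_nonneg_left hprod2 hA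
  have b3 : ‖A * φ E * E'‖ ≤ ‖A‖ := by
    rw [habs_mul, habs_mul, habs, mul_assoc]
    have h1 : ‖E‖ * ‖E'‖ ≤ 1 := by nlinarith
    calc ‖A‖ * (‖E‖ * ‖E'‖) ≤ ‖A‖ * 1 :=
          mul_le_mul_of_nonneg_left h1 hA
      _ = ‖A‖ := mul_one _
  have b4 : ‖B * φ E * Q'‖ ≤ ‖B‖ * cc := by
    have e4 : ‖B * φ E * Q'‖ = ‖B‖ * ‖E*Q'‖ := by
      rw [mul_assoc, habs_mul B, habs_mul (φ E), habs, habs_mul]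
    rw [e4]
    exact mul_le_mul_of_nonneg_left hEQ' (norm_nonneg B)
  have b5 : ‖C * φ Q * E'‖ ≤ ‖C‖ * cc := by
    have e5 : ‖C * φ Q * E'‖ = ‖C‖ * ‖Q*E'‖ := by
      rw [mul_assoc, habs_mul C, habs_mul (φ Q), habs, habs_mul]
    rw [e5]
    exact mul_le_mul_of_nonneg_left hQE' (norm_nonneg C)
  have := tri5 (A * φ (Q*z-E) * E') (A * φ E * (Q'*z - E')) (A * φ E * E')
    (B * φ E * Q') (C * φ Q * E')
  linarith


lemma key_real (Q1 W E1 t αr : ℝ) (hE1 : 0 ≤ E1) (hQ1 : 0 < Q1) (hEW : E1 * W = 1)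
    (hW : Q1 * (t - 1) ≤ W) (hα : 1 < αr) (htα : αr ≤ t) :
    Q1 * E1 ≤ αr/(αr - 1) ∧ Q1 * (t * E1) ≤ αr/(αr - 1) := by
  have hα1 : (0:ℝ) < αr - 1 := by linarith
  have h1 : E1 * (Q1 * (t - 1)) ≤ 1 := by
    calc E1 * (Q1 * (t - 1)) ≤ E1 * W := mul_le_mul_of_nonneg_left hW hE1
      _ = 1 := hEW
  constructor
  · rw [le_div_iff₀ hα1]
    nlinarith [mul_nonneg (mul_nonneg hQ1.le hE1) (sub_nonneg.mpr htα)]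
  · rw [le_div_iff₀ hα1]
    nlinarith [mul_le_mul_of_nonneg_left h1 (by linarith : (0:ℝ) ≤ αr),
      mul_nonneg hQ1.le hE1]

lemma matTransform_apply (φ : ℂ →+* ℂ) (X : Matrix (Fin 2) (Fin 2) ℂ)
    (p q : ℕ → ℂ) (n : ℕ) (i j : Fin 2) :
    matTransform (⇑φ) X (cfMatrix p q n) i j =
    X 0 0 * φ (![p (n+1), p n] i) * (![p (n+1), p n] j)
    + X 0 1 * φ (![p (n+1), p n] i) * (![q (n+1), q n] j)
    + X 1 0 * φ (![q (n+1), q n] i) * (![p (n+1), p n] j)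
    + X 1 1 * φ (![q (n+1), q n] i) * (![q (n+1), q n] j) := by
  fin_cases i <;> fin_cases j <;>
    simp [matTransform, cfMatrix, Matrix.mul_apply, Fin.sum_univ_two,
      Matrix.transpose_apply, Matrix.map_apply, Matrix.vecHead, Matrix.vecTail] <;> ring

theorem main_aux (Γ : Subring ℂ) (hdisc : DiscreteTopology Γ)
    (φ : ℂ →+* ℂ) (hφabs : ∀ x, ‖φ x‖ = ‖x‖)
    (hφΓ : ∀ x ∈ Γ, φ x ∈ Γ)
    (X : Matrix (Fin 2) (Fin 2) ℂ)
    (ξ η : ℂ) (hη : η ≠ 0)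
    (hzero : sform (⇑φ) X ξ η = 0)
    (a zs p q : ℕ → ℂ) (hcf : IsCFE Γ (ξ / η) a zs) (hpq : IsQPair a p q)
    (N : Set ℕ) (hneat : IsNeat zs q N) :
    (∃ M : ℝ, ∀ n ∈ N, ∀ i j : Fin 2,
        ‖matTransform (⇑φ) X (cfMatrix p q n) i j‖ ≤ M)
    ∧ (∀ k : ℕ, 0 < k →
        (∀ i j : Fin 2, ∃ γ ∈ Γ, X i j = γ / (k : ℂ)) →
        {Y : Matrix (Fin 2) (Fin 2) ℂ |
            ∃ n ∈ N, Y = matTransform (⇑φ) X (cfMatrix p q n)}.Finite) := by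
  obtain ⟨haΓ, hz0, habs01, hrec⟩ := hcf
  obtain ⟨hp0, hp1, hpr, hq0, hq1, hqr⟩ := hpq
  obtain ⟨hqmono, α, hα, hbadfin⟩ := hneat
  set z : ℂ := ξ / η with hzdef
  -- the zero of the form at (z, 1)
  have hφη : φ η ≠ 0 := by
    intro h
    have h2 : ‖η‖ = 0 := by rw [← hφabs, h, norm_zero]
    exact hη (by simpa using h2)
  have hz : X 0 0 * φ z * z + X 0 1 * φ z + X 1 0 * z + X 1 1 = 0 := by
    have hφz : φ z = φ ξ / φ η := by rw [hzdef, map_div₀]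
    have h0 : φ ξ * (X 0 0 * ξ + X 0 1 * η) + φ η * (X 1 0 * ξ + X 1 1 * η) = 0 := hzero
    have h1 : X 0 0 * φ z * z + X 0 1 * φ z + X 1 0 * z + X 1 1
        = (φ ξ * (X 0 0 * ξ + X 0 1 * η) + φ η * (X 1 0 * ξ + X 1 1 * η)) / (φ η * η) := by
      rw [hφz, hzdef]
      field_simp
      ring
    rw [h1, h0, zero_div]
  -- base sequences
  set e : ℕ → ℂ := fun n => q n * z - p n with hedef
  have hza : ∀ n, zs n - a n ≠ 0 := by
    intro n h
    have := (habs01 n).1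
    rw [h] at this
    simp at this
  have hzs1 : ∀ n, 1 < ‖zs (n+1)‖ := by
    intro n
    rw [hrec n, norm_inv]
    have h1 := (habs01 n).1
    have h2 := (habs01 n).2
    rw [lt_inv_comm₀] <;> simp [h1, h2]
  have hmem : ∀ n, p n ∈ Γ ∧ q n ∈ Γ := by
    have H : ∀ n, (p n ∈ Γ ∧ q n ∈ Γ) ∧ (p (n+1) ∈ Γ ∧ q (n+1) ∈ Γ) := by
      intro n
      induction n with
      | zero => exact ⟨⟨hp0 ▸ Γ.one_mem, hq0 ▸ Γ.zero_mem⟩, ⟨hp1 ▸ haΓ 0, hq1 ▸ Γ.one_mem⟩⟩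
      | succ m ih =>
        refine ⟨ih.2, ?_, ?_⟩
        · rw [hpr m]; exact Γ.add_mem (Γ.mul_mem (haΓ (m+1)) ih.2.1) ih.1.1
        · rw [hqr m]; exact Γ.add_mem (Γ.mul_mem (haΓ (m+1)) ih.2.2) ih.1.2
    exact fun n => (H n).1
  have hdet : ∀ n, p (n+1) * q n - p n * q (n+1) = -(-1:ℂ)^n := by
    intro n
    induction n with
    | zero => rw [hp0, hp1, hq0, hq1]; ring
    | succ m ih =>
      rw [hpr m, hqr m]
      push_cast
      ring_nf
      ring_nf at ih
      linear_combination -ih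
  have hee : ∀ n, e n = -(zs (n+1)) * e (n+1) := by
    intro n
    induction n with
    | zero =>
      have h1 : zs 1 = (z - a 0)⁻¹ := by rw [hrec 0, hz0]
      have h2 : z - a 0 ≠ 0 := by rw [← hz0]; exact hza 0
      simp only [hedef, hq0, hp0, hq1, hp1, h1]
      field_simp
      ring
    | succ m ih =>
      have h1 : zs (m+2) = (zs (m+1) - a (m+1))⁻¹ := hrec (m+1)
      have h2 : zs (m+1) - a (m+1) ≠ 0 := hza (m+1)
      have he2 : e (m+2) = a (m+1) * e (m+1) + e m := by
        simp only [hedef, hpr m, hqr m]; ring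
      rw [he2, ih, h1]
      field_simp
      ring
  have habse : ∀ n, ‖e n‖ ≤ 1 := by
    intro n
    induction n with
    | zero => simp [hedef, hq0, hp0]
    | succ m ih =>
      have h := hee m
      have : ‖e m‖ = ‖zs (m+1)‖ * ‖e (m+1)‖ := by
        rw [h, norm_mul, norm_neg]
      have h1 := hzs1 m
      nlinarith [norm_nonneg (e (m+1)), norm_nonneg (e m)]
  have hW : ∀ n, e (n+1) * (q (n+1) * zs (n+1) + q n) = (-1:ℂ)^n := by
    intro n
    have h1 := hee n
    have h2 := hdet n
    simp only [hedef] at h1 ⊢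
    linear_combination (q (n+1)) * h1 - h2
  have habsW : ∀ n, ‖e (n+1)‖ * ‖q (n+1) * zs (n+1) + q n‖ = 1 := by
    intro n
    rw [← norm_mul, hW n]
    simp
  -- per-n bounds on products
  set cc : ℝ := α / (α - 1) with hccdef
  set Qv : ℕ → Fin 2 → ℂ := fun n i => ![q (n+1), q n] i with hQvdef
  set Ev : ℕ → Fin 2 → ℂ := fun n i => ![e (n+1), e n] i with hEvdef
  have hgood : ∀ n ∈ N, α ≤ ‖zs (n+1)‖ →
      ∀ i j : Fin 2, ‖Qv n i * Ev n j‖ ≤ cc := by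
    intro n hn hαn i j
    have hWn := habsW n
    have hq1pos : 0 < ‖q (n+1)‖ := by
      rcases (norm_nonneg (q (n+1))).lt_or_eq with h | h
      · exact h
      · exfalso
        have hq10 : q (n+1) = 0 := by simpa using h.symm
        have hqn0 : q n = 0 := by
          have := hqmono n hn
          rw [hq10] at this
          simp at this
          exact this
        rw [hq10, hqn0] at hWn
        simp at hWn
    have h1 : ‖q (n+1) * zs (n+1)‖ ≤
        ‖q (n+1) * zs (n+1) + q n‖ + ‖q n‖ := by
      have := norm_add_le (q (n+1) * zs (n+1) + q n) (-(q n))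
      simpa using this
    have hWlow : ‖q (n+1)‖ * (‖zs (n+1)‖ - 1) ≤
        ‖q (n+1) * zs (n+1) + q n‖ := by
      rw [norm_mul] at h1
      have h2 := hqmono n hn
      nlinarith
    obtain ⟨k1, k2⟩ := key_real (‖q (n+1)‖)
      (‖q (n+1) * zs (n+1) + q n‖) (‖e (n+1)‖)
      (‖zs (n+1)‖) α (norm_nonneg _) hq1pos hWn hWlow hα hαn
    have hE0 : ‖e n‖ = ‖zs (n+1)‖ * ‖e (n+1)‖ := by
      rw [hee n, norm_mul, norm_neg]
    have hqn1 : ‖q n‖ ≤ ‖q (n+1)‖ := hqmono n hn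
    have hk2' : ‖q (n+1)‖ * ‖e n‖ ≤ cc := by rw [hE0]; exact k2
    have hk1' : ‖q (n+1)‖ * ‖e (n+1)‖ ≤ cc := k1
    fin_cases i <;> fin_cases j <;>
      simp only [hQvdef, hEvdef, Matrix.cons_val_zero, Matrix.cons_val_one,
        Matrix.head_cons, norm_mul]
    · exact hk1'
    · exact hk2'
    · exact le_trans (mul_le_mul_of_nonneg_right hqn1 (norm_nonneg _)) hk1'
    · exact le_trans (mul_le_mul_of_nonneg_right hqn1 (norm_nonneg _)) hk2'
  -- entry bound on good indices
  set M0 : ℝ := ‖X 0 0‖ * (2*(‖z‖ * cc + 1) + 1)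
      + ‖X 0 1‖ * cc + ‖X 1 0‖ * cc with hM0def
  have hPfact : ∀ n (i : Fin 2), ![p (n+1), p n] i = Qv n i * z - Ev n i := by
    intro n i
    fin_cases i <;> simp only [hQvdef, hEvdef, hedef] <;>
      simp [Matrix.cons_val_zero, Matrix.cons_val_one, Matrix.head_cons] <;> ring
  have hEb : ∀ n (i : Fin 2), ‖Ev n i‖ ≤ 1 := by
    intro n i
    fin_cases i <;> simp only [hEvdef] <;>
      simp [Matrix.cons_val_zero, Matrix.cons_val_one, Matrix.head_cons] <;> exact habse _
  have hgoodentry : ∀ n ∈ N, α ≤ ‖zs (n+1)‖ → ∀ i j : Fin 2,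
      ‖matTransform (⇑φ) X (cfMatrix p q n) i j‖ ≤ M0 := by
    intro n hn hαn i j
    rw [matTransform_apply, hPfact n i, hPfact n j]
    refine entry_est φ hφabs _ _ _ _ z (Qv n i) (Ev n i) (Qv n j) (Ev n j) hz cc
      (hgood n hn hαn i j) ?_ (hEb n i) (hEb n j)
    have := hgood n hn hαn j i
    rwa [mul_comm] at this
  -- Part 1
  have hpart1 : ∃ M : ℝ, ∀ n ∈ N, ∀ i j : Fin 2,
      ‖matTransform (⇑φ) X (cfMatrix p q n) i j‖ ≤ M := by
    set T : ℕ → Matrix (Fin 2) (Fin 2) ℂ := fun n => matTransform (⇑φ) X (cfMatrix p q n)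
      with hTdef
    set h : ℕ → ℝ := fun n => max (max (‖T n 0 0‖) (‖T n 0 1‖))
      (max (‖T n 1 0‖) (‖T n 1 1‖)) with hhdef
    obtain ⟨Mb, hMb⟩ := (hbadfin.image h).bddAbove
    refine ⟨max M0 Mb, ?_⟩
    intro n hn i j
    by_cases hgc : α ≤ ‖zs (n+1)‖
    · exact le_trans (hgoodentry n hn hgc i j) (le_max_left _ _)
    · push_neg at hgc
      have hhn : h n ≤ Mb := hMb (Set.mem_image_of_mem h ⟨hn, hgc⟩)
      have h00 : ‖T n 0 0‖ ≤ h n := le_trans (le_max_left _ _) (le_max_left _ _)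
      have h01 : ‖T n 0 1‖ ≤ h n := le_trans (le_max_right _ _) (le_max_left _ _)
      have h10 : ‖T n 1 0‖ ≤ h n := le_trans (le_max_left _ _) (le_max_right _ _)
      have h11 : ‖T n 1 1‖ ≤ h n := le_trans (le_max_right _ _) (le_max_right _ _)
      have : ‖T n i j‖ ≤ h n := by
        fin_cases i <;> fin_cases j <;> assumption
      exact le_trans this (le_trans hhn (le_max_right _ _))
  refine ⟨hpart1, ?_⟩
  -- Part 2
  intro k hk hXk
  obtain ⟨M, hM⟩ := hpart1
  have hkne : (k:ℂ) ≠ 0 := Nat.cast_ne_zero.mpr hk.ne'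
  have hkX : ∀ i j : Fin 2, ∃ γ0 ∈ Γ, (k:ℂ) * X i j = γ0 := by
    intro i j
    obtain ⟨γ0, hγ0, hX0⟩ := hXk i j
    exact ⟨γ0, hγ0, by rw [hX0]; field_simp⟩
  have hPm : ∀ n (i : Fin 2), ![p (n+1), p n] i ∈ Γ := by
    intro n i
    fin_cases i <;> simp [Matrix.cons_val_zero, Matrix.cons_val_one, Matrix.head_cons] <;>
      exact (hmem _).1
  have hQm : ∀ n (i : Fin 2), ![q (n+1), q n] i ∈ Γ := by
    intro n i
    fin_cases i <;> simp [Matrix.cons_val_zero, Matrix.cons_val_one, Matrix.head_cons] <;>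
      exact (hmem _).2
  have hmemT : ∀ (n : ℕ) (i j : Fin 2),
      (k:ℂ) * matTransform (⇑φ) X (cfMatrix p q n) i j ∈ Γ := by
    intro n i j
    rw [matTransform_apply]
    obtain ⟨gA, hgA, hA⟩ := hkX 0 0
    obtain ⟨gB, hgB, hB⟩ := hkX 0 1
    obtain ⟨gC, hgC, hC⟩ := hkX 1 0
    obtain ⟨gD, hgD, hD⟩ := hkX 1 1
    have hexp : (k:ℂ) * (X 0 0 * φ (![p (n+1), p n] i) * (![p (n+1), p n] j)
        + X 0 1 * φ (![p (n+1), p n] i) * (![q (n+1), q n] j)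
        + X 1 0 * φ (![q (n+1), q n] i) * (![p (n+1), p n] j)
        + X 1 1 * φ (![q (n+1), q n] i) * (![q (n+1), q n] j))
        = φ (![p (n+1), p n] i) * (gA * (![p (n+1), p n] j))
          + φ (![p (n+1), p n] i) * (gB * (![q (n+1), q n] j))
          + φ (![q (n+1), q n] i) * (gC * (![p (n+1), p n] j))
          + φ (![q (n+1), q n] i) * (gD * (![q (n+1), q n] j)) := by
      rw [← hA, ← hB, ← hC, ← hD]; ring
    rw [hexp]
    exact Γ.add_mem (Γ.add_mem (Γ.add_mem
      (Γ.mul_mem (hφΓ _ (hPm n i)) (Γ.mul_mem hgA (hPm n j)))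
      (Γ.mul_mem (hφΓ _ (hPm n i)) (Γ.mul_mem hgB (hQm n j))))
      (Γ.mul_mem (hφΓ _ (hQm n i)) (Γ.mul_mem hgC (hPm n j))))
      (Γ.mul_mem (hφΓ _ (hQm n i)) (Γ.mul_mem hgD (hQm n j)))
  -- the finite set of possible entries
  haveI hdΓ : DiscreteTopology ((Γ : Set ℂ) : Set ℂ) := hdisc
  have hcl : IsClosed (Γ : Set ℂ) := by
    haveI : DiscreteTopology Γ.toAddSubgroup := hdisc
    exact AddSubgroup.isClosed_of_discrete (H := Γ.toAddSubgroup)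
  have hE2fin : (Metric.closedBall (0:ℂ) (k * M) ∩ (Γ : Set ℂ)).Finite :=
    Metric.finite_isBounded_inter_isClosed DiscreteTopology.isDiscrete Metric.isBounded_closedBall hcl
  set Tset : Set ℂ := {x : ℂ | (k:ℂ) * x ∈ Γ ∧ ‖x‖ ≤ M} with hTsetdef
  have hTfin : Tset.Finite := by
    refine Set.Finite.subset (hE2fin.image (fun y => y / (k:ℂ))) ?_
    rintro x ⟨hx1, hx2⟩
    refine ⟨(k:ℂ) * x, ⟨?_, hx1⟩, by field_simp⟩
    rw [Metric.mem_closedBall, dist_zero_right, norm_mul,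
      Complex.norm_natCast]
    have h0k : (0:ℝ) ≤ (k:ℝ) := Nat.cast_nonneg k
    exact mul_le_mul_of_nonneg_left hx2 h0k
  refine Set.Finite.subset ((hTfin.prod (hTfin.prod (hTfin.prod hTfin))).image
    (fun t : ℂ × ℂ × ℂ × ℂ => !![t.1, t.2.1; t.2.2.1, t.2.2.2])) ?_
  rintro Y ⟨n, hn, rfl⟩
  refine ⟨(matTransform (⇑φ) X (cfMatrix p q n) 0 0, matTransform (⇑φ) X (cfMatrix p q n) 0 1,
    matTransform (⇑φ) X (cfMatrix p q n) 1 0, matTransform (⇑φ) X (cfMatrix p q n) 1 1),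
    ⟨⟨hmemT n 0 0, hM n hn 0 0⟩, ⟨hmemT n 0 1, hM n hn 0 1⟩, ⟨hmemT n 1 0, hM n hn 1 0⟩,
      ⟨hmemT n 1 1, hM n hn 1 1⟩⟩, by exact (Matrix.eta_fin_two (matTransform (⇑φ) X (cfMatrix p q n))).symm⟩


/-- Theorem 3.1: for a σ-symmetric matrix `X` and a nontrivial zero `(ξ,η)` of its
σ-form, along a neat infinite subset `N` the matrices `X_{g_n,σ}` are bounded;
and if the entries of `X` lie in `k⁻¹Γ` then `{X_{g_n,σ} : n ∈ N}` is finite. -/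

theorem stmt_5 (Γ : Subring ℂ) (hdisc : DiscreteTopology Γ)
    (σ : ℂ → ℂ) (hσ : σ = id ∨ σ = fun x => (starRingEnd ℂ) x)
    (X : Matrix (Fin 2) (Fin 2) ℂ) (hX : X.transpose = X.map σ)
    (ξ η : ℂ) (hη : η ≠ 0) (hξη : ξ / η ∉ quotField Γ)
    (hzero : sform σ X ξ η = 0)
    (a zs p q : ℕ → ℂ) (hcf : IsCFE Γ (ξ / η) a zs) (hpq : IsQPair a p q)
    (N : Set ℕ) (hNinf : N.Infinite) (hneat : IsNeat zs q N) :
    (∃ M : ℝ, ∀ n ∈ N, ∀ i j : Fin 2,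
        ‖matTransform σ X (cfMatrix p q n) i j‖ ≤ M)
    ∧ (∀ k : ℕ, 0 < k →
        (∀ i j : Fin 2, ∃ γ ∈ Γ, X i j = γ / (k : ℂ)) →
        {Y : Matrix (Fin 2) (Fin 2) ℂ |
            ∃ n ∈ N, Y = matTransform σ X (cfMatrix p q n)}.Finite) := by
  rcases hσ with rfl | rfl
  · exact main_aux Γ hdisc (RingHom.id ℂ) (fun x => rfl) (fun x hx => hx) X ξ η hη hzero
      a zs p q hcf hpq N hneat
  · exact main_aux Γ hdisc (starRingEnd ℂ) (fun x => Complex.norm_conj x)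
      (fun x hx => conj_mem_of_discrete Γ hdisc hx) X ξ η hη hzero
      a zs p q hcf hpq N hneat
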